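/- Let K be the Klein bottle group, the group with presentation ⟨y, s ∣ s⁻¹ys = y⁻¹⟩. If A and B are nontrivial groups and there exists a surjective group homomorphism from K onto the free product A ∗ B, then A ∗ B is isomorphic to the free product (ℤ/2ℤ) ∗ (ℤ/2ℤ). -/

import Mathlib

/-- The two generators `y`, `s` of the Klein bottle group. -/
inductive KGen : Type
  | y | s

/-- The single relator `s⁻¹ysy` of the Klein bottle group `⟨y, s ∣ s⁻¹ys = y⁻¹⟩`. -/
def kleinRels : Set (FreeGroup KGen) :=
  { (FreeGroup.of KGen.s)⁻¹ * FreeGroup.of KGen.y * FreeGroup.of KGen.s *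
      FreeGroup.of KGen.y }

/-- The Klein bottle group `⟨y, s ∣ s⁻¹ys = y⁻¹⟩`. -/
abbrev KleinBottleGroup : Type := PresentedGroup kleinRels

open Monoid
open scoped commutatorElement

universe u v

section Aux

variable {A : Type u} {B : Type v} [Group A] [Group B]

/-- The two-factor family for `CoprodI`. -/
abbrev MF (A : Type u) (B : Type v) : Bool → Type (max u v) :=
  fun b => bif b then ULift.{v} A else ULift.{u} B

instance : ∀ b, Group (MF A B b) := fun b => by cases b <;> dsimp [MF] <;> infer_instance

/-- The comparison map from the binary coproduct to the indexed coproduct. -/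
def toI : Coprod A B →* CoprodI (MF A B) :=
  Coprod.lift ((CoprodI.of (i := true)).comp MulEquiv.ulift.symm.toMonoidHom)
    ((CoprodI.of (i := false)).comp MulEquiv.ulift.symm.toMonoidHom)

@[simp] lemma toI_inl (x : A) : toI (Coprod.inl x : Coprod A B) =
    CoprodI.of (M := MF A B) (i := true) (ULift.up x) := by
  simp [toI, Coprod.lift_apply_inl]; rfl

@[simp] lemma toI_inr (y : B) : toI (Coprod.inr y : Coprod A B) =
    CoprodI.of (M := MF A B) (i := false) (ULift.up y) := by
  simp [toI, Coprod.lift_apply_inr]; rfl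

lemma word_prod_injective {ι : Type*} {M : ι → Type*} [∀ i, Monoid (M i)] :
    Function.Injective (CoprodI.Word.prod : CoprodI.Word M → CoprodI M) := by
  classical
  intro w₁ w₂ h
  exact CoprodI.Word.equiv.symm.injective h

lemma up_ne_one {G : Type*} [Group G] {x : G} (h : x ≠ 1) : (ULift.up x : ULift G) ≠ 1 :=
  fun hh => h (congrArg ULift.down hh)

/-- letter in the `A` factor -/
abbrev la (x : A) : (Σ b, MF A B b) := ⟨true, ULift.up x⟩
/-- letter in the `B` factor -/
abbrev lb (y : B) : (Σ b, MF A B b) := ⟨false, ULift.up y⟩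

lemma key2 {a1 a2 a3 a4 a5 a6 a7 a8 : A} {b1 b2 b3 b4 : B}
    (ha1 : a1 ≠ 1) (ha2 : a2 ≠ 1) (ha3 : a3 ≠ 1) (ha4 : a4 ≠ 1)
    (ha5 : a5 ≠ 1) (ha6 : a6 ≠ 1) (ha7 : a7 ≠ 1) (ha8 : a8 ≠ 1)
    (hb1 : b1 ≠ 1) (hb2 : b2 ≠ 1) (hb3 : b3 ≠ 1) (hb4 : b4 ≠ 1)
    (h : (Coprod.inl a1 * Coprod.inr b1 * Coprod.inl a2 * Coprod.inr b2 * Coprod.inl a3 *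
          Coprod.inr b3 * Coprod.inl a4 * Coprod.inr b4 : Coprod A B) =
        Coprod.inl a5 * Coprod.inr b1 * Coprod.inl a6 * Coprod.inr b2 * Coprod.inl a7 *
          Coprod.inr b3 * Coprod.inl a8 * Coprod.inr b4) : a1 = a5 := by
  set w₁ : CoprodI.Word (MF A B) :=
    ⟨[la a1, lb b1, la a2, lb b2, la a3, lb b3, la a4, lb b4], by
      simp [up_ne_one, ha1, ha2, ha3, ha4, hb1, hb2, hb3, hb4], by simp [List.isChain_cons_cons]⟩ with hw₁
  set w₂ : CoprodI.Word (MF A B) :=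
    ⟨[la a5, lb b1, la a6, lb b2, la a7, lb b3, la a8, lb b4], by
      simp [up_ne_one, ha5, ha6, ha7, ha8, hb1, hb2, hb3, hb4], by simp [List.isChain_cons_cons]⟩ with hw₂
  have e₁ : w₁.prod = toI (Coprod.inl a1 * Coprod.inr b1 * Coprod.inl a2 * Coprod.inr b2 *
      Coprod.inl a3 * Coprod.inr b3 * Coprod.inl a4 * Coprod.inr b4 : Coprod A B) := by
    simp [hw₁, CoprodI.Word.prod, map_mul, mul_assoc]
  have e₂ : w₂.prod = toI (Coprod.inl a5 * Coprod.inr b1 * Coprod.inl a6 * Coprod.inr b2 *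
      Coprod.inl a7 * Coprod.inr b3 * Coprod.inl a8 * Coprod.inr b4 : Coprod A B) := by
    simp [hw₂, CoprodI.Word.prod, map_mul, mul_assoc]
  have h3 : w₁ = w₂ := word_prod_injective (e₁.trans ((congrArg toI h).trans e₂.symm))
  have := congrArg (fun w : CoprodI.Word (MF A B) => w.toList) h3
  simp [hw₁, hw₂] at this
  exact this.1

lemma uniq_of_comm
    (hcc : ∀ g h g' h' : Coprod A B, Commute ⁅g, h⁆ ⁅g', h'⁆)
    {x x' : A} (hx : x ≠ 1) (hx' : x' ≠ 1) {y : B} (hy : y ≠ 1) : x = x' := by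
  have hcomm := (hcc (Coprod.inl x) (Coprod.inr y) (Coprod.inl x') (Coprod.inr y)).eq
  refine key2 hx (inv_ne_one.mpr hx) hx' (inv_ne_one.mpr hx') hx' (inv_ne_one.mpr hx') hx
    (inv_ne_one.mpr hx) hy (inv_ne_one.mpr hy) hy (inv_ne_one.mpr hy) ?_
  simpa [commutatorElement_def, mul_assoc, ← map_inv] using hcomm

lemma equiv_zmod2 {G : Type*} [Group G] [Nontrivial G]
    (huniq : ∀ x x' : G, x ≠ 1 → x' ≠ 1 → x = x') :
    Nonempty (G ≃* Multiplicative (ZMod 2)) := by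
  classical
  obtain ⟨x₀, hx₀⟩ := exists_ne (1 : G)
  have hsq : ∀ x : G, x * x = 1 := by
    intro x
    by_cases hx : x = 1
    · simp [hx]
    · have h : x = x⁻¹ := huniq _ _ hx (inv_ne_one.mpr hx)
      calc x * x = x * x⁻¹ := by rw [← h]
      _ = 1 := mul_inv_cancel x
  have hzne : (Multiplicative.ofAdd (1 : ZMod 2)) ≠ 1 := by decide
  have hz : ∀ z : Multiplicative (ZMod 2), z = 1 ∨ z = Multiplicative.ofAdd 1 := by decide
  refine ⟨{ toFun := fun x => if x = 1 then 1 else Multiplicative.ofAdd 1,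
            invFun := fun z => if z = 1 then 1 else x₀,
            left_inv := ?_, right_inv := ?_, map_mul' := ?_ }⟩
  · intro x
    by_cases hx : x = 1
    · simp [hx]
    · have hxx : x = x₀ := huniq _ _ hx hx₀
      simp only [if_neg hx, if_neg hzne]
      exact hxx.symm
  · intro z
    rcases hz z with rfl | rfl
    · simp
    · simp [hzne, hx₀]
  · intro x y
    by_cases hx : x = 1
    · simp [hx]
    · by_cases hy : y = 1
      · simp [hy]
      · have hxy : x = y := huniq _ _ hx hy
        have h1 : x * y = 1 := by rw [hxy]; exact hsq y
        have h2 : (Multiplicative.ofAdd (1 : ZMod 2)) * Multiplicative.ofAdd (1 : ZMod 2) = 1 := by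
          decide
        simp [h1, hx, hy, h2]

end Aux

/-- If `A` and `B` are nontrivial groups and there is a surjective homomorphism from
the Klein bottle group `⟨y, s ∣ s⁻¹ys = y⁻¹⟩` onto the free product `A ∗ B`, then
`A ∗ B ≅ (ℤ/2ℤ) ∗ (ℤ/2ℤ)`. -/
theorem free_product_quotient_of_klein_bottle_group
    {A B : Type*} [Group A] [Group B] [Nontrivial A] [Nontrivial B]
    (φ : KleinBottleGroup →* Monoid.Coprod A B) (hφ : Function.Surjective φ) :
    Nonempty (Monoid.Coprod A B ≃*
      Monoid.Coprod (Multiplicative (ZMod 2)) (Multiplicative (ZMod 2))) := by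
  classical
  set G := Monoid.Coprod A B with hG
  set a : G := φ (PresentedGroup.of KGen.y) with ha
  set b : G := φ (PresentedGroup.of KGen.s) with hb
  -- the Klein bottle relation
  have hrel : b⁻¹ * a * b * a = 1 := by
    have h1 : (PresentedGroup.mk kleinRels ((FreeGroup.of KGen.s)⁻¹ * FreeGroup.of KGen.y *
        FreeGroup.of KGen.s * FreeGroup.of KGen.y)) = 1 := by
      apply (QuotientGroup.eq_one_iff _).mpr
      exact Subgroup.subset_normalClosure rfl
    have := congrArg φ h1
    simpa [map_mul, map_inv, ha, hb, PresentedGroup.of] using this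
  have hconj : b⁻¹ * a * b = a⁻¹ := eq_inv_iff_mul_eq_one.mpr hrel
  have hconj' : b * a * b⁻¹ = a⁻¹ := by
    have h2 : b * a⁻¹ * b⁻¹ = a := by rw [← hconj]; simp [mul_assoc]
    calc b * a * b⁻¹ = (b * a⁻¹ * b⁻¹)⁻¹ := by rw [mul_inv_rev, mul_inv_rev, inv_inv, inv_inv, mul_assoc]
    _ = a⁻¹ := by rw [h2]
  -- generation
  have himg : φ '' Set.range (PresentedGroup.of : KGen → KleinBottleGroup) = {a, b} := by
    rw [← Set.range_comp]
    ext g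
    constructor
    · rintro ⟨k, rfl⟩
      cases k
      · exact Or.inl rfl
      · exact Or.inr rfl
    · rintro (rfl | rfl)
      exacts [⟨KGen.y, rfl⟩, ⟨KGen.s, rfl⟩]
  have hgen : Subgroup.closure ({a, b} : Set G) = ⊤ := by
    have h1 : Subgroup.map φ ⊤ = ⊤ := by
      rw [← MonoidHom.range_eq_map]
      exact MonoidHom.range_eq_top.2 hφ
    rw [← PresentedGroup.closure_range_of kleinRels, MonoidHom.map_closure, himg] at h1
    exact h1
  -- the cyclic normal subgroup
  set S : Subgroup G := Subgroup.zpowers a with hS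
  have hbzpow : ∀ n : ℤ, b * a ^ n * b⁻¹ = a ^ (-n) := by
    intro n
    rw [← conj_zpow, hconj', inv_zpow, ← zpow_neg]
  have hbzpow' : ∀ n : ℤ, b⁻¹ * a ^ n * b = a ^ (-n) := by
    intro n
    have h0 : b⁻¹ * a ^ n * b = b⁻¹ * a ^ n * b⁻¹⁻¹ := by rw [inv_inv]
    rw [h0, ← conj_zpow, show b⁻¹ * a * b⁻¹⁻¹ = a⁻¹ by rw [inv_inv]; exact hconj,
      inv_zpow, ← zpow_neg]
  have hbn : b ∈ Subgroup.normalizer (S : Set G) := by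
    rw [Subgroup.mem_normalizer_iff]
    intro g
    constructor
    · rintro ⟨n, rfl⟩
      exact ⟨-n, (hbzpow n).symm⟩
    · rintro ⟨n, hn⟩
      refine ⟨-n, ?_⟩
      show a ^ (-n) = g
      have hn' : a ^ n = b * g * b⁻¹ := hn
      rw [← hbzpow' n, hn']
      rw [mul_assoc, mul_assoc, mul_assoc, inv_mul_cancel_left, inv_mul_cancel, mul_one]
  have hnorm : Subgroup.normalizer (S : Set G) = ⊤ := by
    rw [← top_le_iff, ← hgen]
    apply (Subgroup.closure_le _).2
    rintro g (rfl | rfl)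
    · exact Subgroup.le_normalizer (Subgroup.mem_zpowers a)
    · exact hbn
  haveI : S.Normal := Subgroup.normalizer_eq_top_iff.mp hnorm
  -- all commutators lie in S
  have hcommS : ∀ g h : G, ⁅g, h⁆ ∈ S := by
    intro g h
    set π := QuotientGroup.mk' S with hπ
    have hπa : π a = 1 := (QuotientGroup.eq_one_iff a).mpr (Subgroup.mem_zpowers a)
    have hq : ∀ q : G ⧸ S, q ∈ Subgroup.zpowers (π b) := by
      intro q
      obtain ⟨g₀, rfl⟩ := QuotientGroup.mk'_surjective S q
      have hg₀ : g₀ ∈ Subgroup.closure ({a, b} : Set G) := hgen ▸ Subgroup.mem_top g₀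
      have hle : Subgroup.closure ({a, b} : Set G) ≤ (Subgroup.zpowers (π b)).comap π := by
        apply (Subgroup.closure_le _).2
        rintro g₁ (rfl | rfl)
        · exact Subgroup.mem_comap.mpr (by rw [hπa]; exact one_mem _)
        · exact Subgroup.mem_zpowers _
      exact hle hg₀
    have hone : π ⁅g, h⁆ = 1 := by
      rw [map_commutatorElement]
      obtain ⟨m, hm⟩ := hq (π g)
      obtain ⟨n, hn⟩ := hq (π h)
      rw [← hm, ← hn]
      exact commutatorElement_eq_one_iff_commute.mpr ((Commute.refl (π b)).zpow_zpow m n)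
    exact (QuotientGroup.eq_one_iff _).mp hone
  -- commutators commute
  have hcc : ∀ g h g' h' : G, Commute ⁅g, h⁆ ⁅g', h'⁆ := by
    intro g h g' h'
    obtain ⟨m, hm⟩ := hcommS g h
    obtain ⟨n, hn⟩ := hcommS g' h'
    rw [← hm, ← hn]
    exact (Commute.refl a).zpow_zpow m n
  -- transfer to the swapped coproduct
  have hswap : ∀ u : Monoid.Coprod B A, Monoid.Coprod.swap A B (Monoid.Coprod.swap B A u) = u :=
    fun u => DFunLike.congr_fun (Monoid.Coprod.swap_comp_swap (M := A) (N := B)) u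
  have hcc' : ∀ g h g' h' : Monoid.Coprod B A, Commute ⁅g, h⁆ ⁅g', h'⁆ := by
    intro g h g' h'
    have := (hcc (Monoid.Coprod.swap B A g) (Monoid.Coprod.swap B A h)
        (Monoid.Coprod.swap B A g') (Monoid.Coprod.swap B A h')).map (Monoid.Coprod.swap A B)
    simpa [map_commutatorElement, hswap] using this
  -- both factors have a unique nontrivial element
  obtain ⟨y₀, hy₀⟩ := exists_ne (1 : B)
  obtain ⟨x₀, hx₀⟩ := exists_ne (1 : A)
  have hAuniq : ∀ x x' : A, x ≠ 1 → x' ≠ 1 → x = x' := fun x x' hx hx' =>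
    uniq_of_comm hcc hx hx' hy₀
  have hBuniq : ∀ y y' : B, y ≠ 1 → y' ≠ 1 → y = y' := fun y y' hy hy' =>
    uniq_of_comm hcc' hy hy' hx₀
  obtain ⟨eA⟩ := equiv_zmod2 hAuniq
  obtain ⟨eB⟩ := equiv_zmod2 hBuniq
  exact ⟨MulEquiv.coprodCongr eA eB⟩
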